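/- arXiv:0809.2618 — 2 statements merged into one kernel-verified Lean document; each statement's English description precedes it below -/
import Mathlib

section
/- Let S = {(x,y,t) : x = yG(t)} ⊂ ℍ¹ with G ∈ C¹, G' ≥ 0, p₀ = (0,0,t₀), and ρ the gauge distance from p₀. With Yρ = p̄X₁ρ + q̄X₂ρ and A = ⟨ζ,ν^H⟩ + f·ω̄ as computed on S (ζ = xX₁+yX₂, f = 2(t-t₀)), one has at every point of S with ρ > 0: Yρ·A = 16(t-t₀)²·(y²/2)G'(t) / (ρ³(1+(y²/2)G'(t))), and consequently 0 ≤ Yρ·A ≤ ρ, so |ρ - Yρ·A| ≤ ρ. -/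
/-- On a graphical strip `S = {x = yG(t)}` with `G' ≥ 0`, `p₀ = (0,0,t₀)`, and `ρ`
the gauge distance from `p₀` (so `ρ⁴ = y⁴(1+G²)² + 16(t-t₀)²`), with
`Yρ = -4y(t-t₀)(1+G²)/(ρ³√(1+G²))` and `A = -2(t-t₀)yG'/(√(1+G²)(1+(y²/2)G'))`,
one has `Yρ·A = 16(t-t₀)²(y²/2)G'/(ρ³(1+(y²/2)G'))`, hence `0 ≤ Yρ·A ≤ ρ` and
`|ρ - Yρ·A| ≤ ρ`. -/
theorem strip_key_estimate (G : ℝ → ℝ) (hG : ContDiff ℝ 1 G)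
    (hG' : ∀ s, 0 ≤ deriv G s) (y t t₀ ρ : ℝ) (hρpos : 0 < ρ)
    (hρ : ρ ^ 4 = y ^ 4 * (1 + G t ^ 2) ^ 2 + 16 * (t - t₀) ^ 2) :
    (-(4 * y * (t - t₀) * (1 + G t ^ 2)) / (ρ ^ 3 * Real.sqrt (1 + G t ^ 2)))
        * (-(2 * (t - t₀) * y * deriv G t) /
            (Real.sqrt (1 + G t ^ 2) * (1 + y ^ 2 / 2 * deriv G t)))
      = 16 * (t - t₀) ^ 2 * (y ^ 2 / 2 * deriv G t) /
          (ρ ^ 3 * (1 + y ^ 2 / 2 * deriv G t)) ∧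
    0 ≤ (-(4 * y * (t - t₀) * (1 + G t ^ 2)) / (ρ ^ 3 * Real.sqrt (1 + G t ^ 2)))
        * (-(2 * (t - t₀) * y * deriv G t) /
            (Real.sqrt (1 + G t ^ 2) * (1 + y ^ 2 / 2 * deriv G t))) ∧
    (-(4 * y * (t - t₀) * (1 + G t ^ 2)) / (ρ ^ 3 * Real.sqrt (1 + G t ^ 2)))
        * (-(2 * (t - t₀) * y * deriv G t) /
            (Real.sqrt (1 + G t ^ 2) * (1 + y ^ 2 / 2 * deriv G t)))
      ≤ ρ ∧
    |ρ - (-(4 * y * (t - t₀) * (1 + G t ^ 2)) / (ρ ^ 3 * Real.sqrt (1 + G t ^ 2)))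
        * (-(2 * (t - t₀) * y * deriv G t) /
            (Real.sqrt (1 + G t ^ 2) * (1 + y ^ 2 / 2 * deriv G t)))|
      ≤ ρ := by

  set g := G t with hg
  set d := deriv G t with hd
  have hdpos : 0 ≤ d := hG' t
  have h1g : (0:ℝ) < 1 + g ^ 2 := by positivity
  have hs : Real.sqrt (1 + g ^ 2) ^ 2 = 1 + g ^ 2 := Real.sq_sqrt h1g.le
  have hspos : 0 < Real.sqrt (1 + g ^ 2) := Real.sqrt_pos.mpr h1g
  have hc : 0 ≤ y ^ 2 / 2 * d := by positivity
  have hcpos : 0 < 1 + y ^ 2 / 2 * d := by linarith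
  have hρ3 : (0:ℝ) < ρ ^ 3 := by positivity
  have heq : (-(4 * y * (t - t₀) * (1 + g ^ 2)) / (ρ ^ 3 * Real.sqrt (1 + g ^ 2)))
        * (-(2 * (t - t₀) * y * d) /
            (Real.sqrt (1 + g ^ 2) * (1 + y ^ 2 / 2 * d)))
      = 16 * (t - t₀) ^ 2 * (y ^ 2 / 2 * d) /
          (ρ ^ 3 * (1 + y ^ 2 / 2 * d)) := by
    rw [div_mul_div_comm]
    rw [show ρ ^ 3 * Real.sqrt (1 + g ^ 2) * (Real.sqrt (1 + g ^ 2) * (1 + y ^ 2 / 2 * d))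
        = (Real.sqrt (1 + g ^ 2) ^ 2) * (ρ ^ 3 * (1 + y ^ 2 / 2 * d)) by ring, hs]
    rw [div_eq_div_iff (by positivity) (by positivity)]
    ring
  have hle : 16 * (t - t₀) ^ 2 * (y ^ 2 / 2 * d) / (ρ ^ 3 * (1 + y ^ 2 / 2 * d)) ≤ ρ := by
    rw [div_le_iff₀ (by positivity)]
    have h16 : 16 * (t - t₀) ^ 2 ≤ ρ ^ 4 := by nlinarith [sq_nonneg (y ^ 2 * (1 + g ^ 2))]
    have : ρ * (ρ ^ 3 * (1 + y ^ 2 / 2 * d)) = ρ ^ 4 * (1 + y ^ 2 / 2 * d) := by ring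
    rw [this]
    nlinarith [sq_nonneg (t - t₀)]
  have h0 : 0 ≤ 16 * (t - t₀) ^ 2 * (y ^ 2 / 2 * d) / (ρ ^ 3 * (1 + y ^ 2 / 2 * d)) := by positivity
  refine ⟨heq, by rw [heq]; exact h0, by rw [heq]; exact hle, ?_⟩
  rw [heq, abs_le]
  constructor <;> linarith
end

section
/- Let G ∈ C¹(ℝ) with G' ≥ 0, p₀ = (0,0,t₀), and for r > 0 define P(r) = 2∫_{t₀-r²/4}^{t₀+r²/4} [(r⁴-16(t-t₀)²)^{1/4} + (G'(t)/6)(r⁴-16(t-t₀)²)^{3/4}/(1+G(t)²)] dt (the H-perimeter of the graphical strip S = {x = yG(t)} in the gauge ball B(p₀,r)). Then lim_{r→0⁺} P(r)/r³ = ∫_0^1 (1-τ²)^{1/4} dτ > 0. -/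
open Filter MeasureTheory intervalIntegral Set

private lemma cont_rpow_q {q : ℝ} (hq : 0 ≤ q) : Continuous fun x : ℝ => x ^ q :=
  Real.continuous_rpow_const hq

private lemma cont_f1 : Continuous fun τ : ℝ => (1 - τ ^ 2) ^ ((1 : ℝ) / 4) :=
  (cont_rpow_q (by norm_num)).comp (by continuity)

private lemma cont_f34 : Continuous fun τ : ℝ => (1 - τ ^ 2) ^ ((3 : ℝ) / 4) :=
  (cont_rpow_q (by norm_num)).comp (by continuity)

/-- For a graphical strip `S = {x = yG(t)}` with `G ∈ C¹`, `G' ≥ 0`, and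
`p₀ = (0,0,t₀)`, the H-perimeter `P(r)` of `S` in the gauge ball `B(p₀,r)`
satisfies `lim_{r→0⁺} P(r)/r³ = ∫₀¹(1-τ²)^{1/4}dτ > 0`. -/
theorem perimeter_density_at_zero (G : ℝ → ℝ) (hG : ContDiff ℝ 1 G)
    (hG' : ∀ t, 0 ≤ deriv G t) (t₀ : ℝ) (P : ℝ → ℝ)
    (hP : ∀ r > (0 : ℝ), P r =
      2 * ∫ t in (t₀ - r ^ 2 / 4)..(t₀ + r ^ 2 / 4),
        ((r ^ 4 - 16 * (t - t₀) ^ 2) ^ ((1 : ℝ) / 4)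
          + deriv G t / 6 * (r ^ 4 - 16 * (t - t₀) ^ 2) ^ ((3 : ℝ) / 4)
              / (1 + G t ^ 2))) :
    Tendsto (fun r => P r / r ^ 3) (nhdsWithin 0 (Set.Ioi 0))
      (nhds (∫ τ in (0 : ℝ)..1, (1 - τ ^ 2) ^ ((1 : ℝ) / 4))) ∧
    0 < ∫ τ in (0 : ℝ)..1, (1 - τ ^ 2) ^ ((1 : ℝ) / 4) := by
  set I : ℝ := ∫ τ in (0 : ℝ)..1, (1 - τ ^ 2) ^ ((1 : ℝ) / 4) with hI
  have hdG : Continuous (deriv G) := hG.continuous_deriv le_rfl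
  -- continuity of the second integrand, for each r
  have cont_f2 : ∀ r : ℝ, Continuous fun τ : ℝ =>
      deriv G (t₀ + r ^ 2 / 4 * τ) / 6 * (1 - τ ^ 2) ^ ((3 : ℝ) / 4)
        / (1 + G (t₀ + r ^ 2 / 4 * τ) ^ 2) := by
    intro r
    have hin : Continuous fun τ : ℝ => t₀ + r ^ 2 / 4 * τ := by continuity
    refine Continuous.div (((hdG.comp hin).div_const 6).mul cont_f34)
      (continuous_const.add ((hG.continuous.comp hin).pow 2)) ?_
    intro τ; positivity
  -- J r : the error integral
  set J : ℝ → ℝ := fun r => ∫ τ in (-1 : ℝ)..1,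
      deriv G (t₀ + r ^ 2 / 4 * τ) / 6 * (1 - τ ^ 2) ^ ((3 : ℝ) / 4)
        / (1 + G (t₀ + r ^ 2 / 4 * τ) ^ 2) with hJ
  -- evenness: ∫_{-1}^1 f1 = 2 I
  have heven : (∫ τ in (-1 : ℝ)..1, (1 - τ ^ 2) ^ ((1 : ℝ) / 4)) = 2 * I := by
    have h1 : IntervalIntegrable (fun τ : ℝ => (1 - τ ^ 2) ^ ((1 : ℝ) / 4)) volume (-1) 0 :=
      cont_f1.intervalIntegrable _ _
    have h2 : IntervalIntegrable (fun τ : ℝ => (1 - τ ^ 2) ^ ((1 : ℝ) / 4)) volume 0 1 :=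
      cont_f1.intervalIntegrable _ _
    have hsplit := integral_add_adjacent_intervals h1 h2
    have hneg : (∫ τ in (-1 : ℝ)..0, (1 - τ ^ 2) ^ ((1 : ℝ) / 4))
        = ∫ τ in (0 : ℝ)..1, (1 - τ ^ 2) ^ ((1 : ℝ) / 4) := by
      have := integral_comp_neg (a := (0:ℝ)) (b := 1)
        (fun τ : ℝ => (1 - τ ^ 2) ^ ((1 : ℝ) / 4))
      simp only [neg_zero, neg_sq] at this
      rw [← this]
    rw [← hsplit, hneg, hI]; ring
  -- key identity
  have hkey : ∀ r ∈ Set.Ioi (0:ℝ), P r / r ^ 3 = I + r ^ 2 / 2 * J r := by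
    intro r hr
    have hr0 : (0:ℝ) < r := hr
    have hc : (r ^ 2 / 4 : ℝ) ≠ 0 := by positivity
    have hsub := smul_integral_comp_mul_add (a := (-1:ℝ)) (b := 1)
      (fun t => (r ^ 4 - 16 * (t - t₀) ^ 2) ^ ((1 : ℝ) / 4)
          + deriv G t / 6 * (r ^ 4 - 16 * (t - t₀) ^ 2) ^ ((3 : ℝ) / 4)
              / (1 + G t ^ 2)) (r ^ 2 / 4) t₀
    have hb1 : r ^ 2 / 4 * (-1) + t₀ = t₀ - r ^ 2 / 4 := by ring
    have hb2 : r ^ 2 / 4 * 1 + t₀ = t₀ + r ^ 2 / 4 := by ring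
    rw [hb1, hb2] at hsub
    -- pointwise simplification on [-1,1]
    have hpt : ∀ x ∈ Set.uIcc (-1:ℝ) 1,
        ((r ^ 4 - 16 * (r ^ 2 / 4 * x + t₀ - t₀) ^ 2) ^ ((1 : ℝ) / 4)
          + deriv G (r ^ 2 / 4 * x + t₀) / 6
              * (r ^ 4 - 16 * (r ^ 2 / 4 * x + t₀ - t₀) ^ 2) ^ ((3 : ℝ) / 4)
              / (1 + G (r ^ 2 / 4 * x + t₀) ^ 2))
        = r * (1 - x ^ 2) ^ ((1 : ℝ) / 4)
          + r ^ 3 * (deriv G (t₀ + r ^ 2 / 4 * x) / 6 * (1 - x ^ 2) ^ ((3 : ℝ) / 4)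
              / (1 + G (t₀ + r ^ 2 / 4 * x) ^ 2)) := by
      intro x hx
      rw [Set.uIcc_of_le (by norm_num)] at hx
      have hx2 : 0 ≤ 1 - x ^ 2 := by nlinarith [hx.1, hx.2]
      have harg : r ^ 4 - 16 * (r ^ 2 / 4 * x + t₀ - t₀) ^ 2 = r ^ 4 * (1 - x ^ 2) := by ring
      have hr4 : (0:ℝ) ≤ r ^ 4 := by positivity
      have h14 : (r ^ 4 : ℝ) ^ ((1 : ℝ) / 4) = r := by
        rw [← Real.rpow_natCast r 4, ← Real.rpow_mul hr0.le]
        norm_num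
      have h34 : (r ^ 4 : ℝ) ^ ((3 : ℝ) / 4) = r ^ 3 := by
        rw [← Real.rpow_natCast r 4, ← Real.rpow_mul hr0.le]
        norm_num
      rw [harg, Real.mul_rpow hr4 hx2, Real.mul_rpow hr4 hx2, h14, h34,
        show r ^ 2 / 4 * x + t₀ = t₀ + r ^ 2 / 4 * x by ring]
      ring
    have hint : (∫ x in (-1:ℝ)..1,
        ((r ^ 4 - 16 * (r ^ 2 / 4 * x + t₀ - t₀) ^ 2) ^ ((1 : ℝ) / 4)
          + deriv G (r ^ 2 / 4 * x + t₀) / 6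
              * (r ^ 4 - 16 * (r ^ 2 / 4 * x + t₀ - t₀) ^ 2) ^ ((3 : ℝ) / 4)
              / (1 + G (r ^ 2 / 4 * x + t₀) ^ 2)))
        = r * (2 * I) + r ^ 3 * J r := by
      rw [integral_congr hpt, integral_add
        (f := fun x : ℝ => r * (1 - x ^ 2) ^ ((1 : ℝ) / 4))
        (g := fun x : ℝ => r ^ 3 * (deriv G (t₀ + r ^ 2 / 4 * x) / 6
            * (1 - x ^ 2) ^ ((3 : ℝ) / 4) / (1 + G (t₀ + r ^ 2 / 4 * x) ^ 2)))
        ((continuous_const.mul cont_f1).intervalIntegrable _ _)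
        ((continuous_const.mul (cont_f2 r)).intervalIntegrable _ _),
        intervalIntegral.integral_const_mul, intervalIntegral.integral_const_mul, heven, hJ]
    have hPr := hP r hr0
    rw [← hsub] at hPr
    have : P r = 2 * (r ^ 2 / 4 * (r * (2 * I) + r ^ 3 * J r)) := by
      rw [hPr, smul_eq_mul, hint]
    rw [this]
    field_simp
    ring
  -- bound on J for 0 < r < 2
  obtain ⟨M, hM⟩ := (isCompact_Icc (a := t₀ - 1) (b := t₀ + 1)).exists_bound_of_continuousOn
    hdG.continuousOn
  have hM0 : 0 ≤ M := le_trans (norm_nonneg _) (hM t₀ (by constructor <;> linarith))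
  have hJbound : ∀ r ∈ Set.Ioo (0:ℝ) 2, J r ≤ M / 3 ∧ 0 ≤ J r := by
    intro r hr
    have hbnd : ∀ x ∈ Set.Icc (-1:ℝ) 1,
        deriv G (t₀ + r ^ 2 / 4 * x) / 6 * (1 - x ^ 2) ^ ((3 : ℝ) / 4)
          / (1 + G (t₀ + r ^ 2 / 4 * x) ^ 2) ≤ M / 6 := by
      intro x hx
      have hx2 : 0 ≤ 1 - x ^ 2 := by nlinarith [hx.1, hx.2]
      have hmem : t₀ + r ^ 2 / 4 * x ∈ Set.Icc (t₀ - 1) (t₀ + 1) := by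
        have h1 : |r ^ 2 / 4 * x| ≤ 1 := by
          rw [abs_mul]
          have : |x| ≤ 1 := abs_le.mpr ⟨hx.1, hx.2⟩
          have h2 : |r ^ 2 / 4| ≤ 1 := by
            rw [abs_of_nonneg (by positivity)]
            nlinarith [hr.1, hr.2]
          nlinarith [abs_nonneg x, abs_nonneg (r ^ 2 / 4)]
        rw [abs_le] at h1
        constructor <;> linarith [h1.1, h1.2]
      have hd := hM _ hmem
      rw [Real.norm_eq_abs, abs_of_nonneg (hG' _)] at hd
      have hu1 : (1 - x ^ 2) ^ ((3 : ℝ) / 4) ≤ 1 :=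
        Real.rpow_le_one hx2 (by nlinarith [hx.1, hx.2]) (by norm_num)
      have hu0 : 0 ≤ (1 - x ^ 2) ^ ((3 : ℝ) / 4) := Real.rpow_nonneg hx2 _
      have hstep1 : deriv G (t₀ + r ^ 2 / 4 * x) / 6 * (1 - x ^ 2) ^ ((3 : ℝ) / 4)
          / (1 + G (t₀ + r ^ 2 / 4 * x) ^ 2)
          ≤ deriv G (t₀ + r ^ 2 / 4 * x) / 6 * (1 - x ^ 2) ^ ((3 : ℝ) / 4) :=
        div_le_self (mul_nonneg (div_nonneg (hG' _) (by norm_num)) (Real.rpow_nonneg hx2 _))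
          (by nlinarith [sq_nonneg (G (t₀ + r ^ 2 / 4 * x))])
      have hstep2 : deriv G (t₀ + r ^ 2 / 4 * x) / 6 * (1 - x ^ 2) ^ ((3 : ℝ) / 4)
          ≤ M / 6 * 1 := by
        apply mul_le_mul _ hu1 hu0 (by positivity)
        linarith [hG' (t₀ + r ^ 2 / 4 * x)]
      linarith
    constructor
    · calc J r ≤ ∫ _ in (-1:ℝ)..1, M / 6 :=
            integral_mono_on (by norm_num) ((cont_f2 r).intervalIntegrable _ _)
              (intervalIntegrable_const) hbnd
        _ = M / 3 := by simp; ring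
    · apply intervalIntegral.integral_nonneg (by norm_num : (-1:ℝ) ≤ 1)
      intro x hx
      have hx2 : 0 ≤ 1 - x ^ 2 := by nlinarith [hx.1, hx.2]
      exact div_nonneg (mul_nonneg (div_nonneg (hG' _) (by norm_num))
        (Real.rpow_nonneg hx2 _)) (by positivity)
  -- squeeze
  have hzero : Tendsto (fun r => r ^ 2 / 2 * J r) (nhdsWithin 0 (Set.Ioi 0)) (nhds 0) := by
    apply squeeze_zero'
    · filter_upwards [Ioo_mem_nhdsGT_of_mem (by norm_num : (0:ℝ) ∈ Set.Ico 0 2)] with r hr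
      exact mul_nonneg (by positivity) (hJbound r hr).2
    · filter_upwards [Ioo_mem_nhdsGT_of_mem (by norm_num : (0:ℝ) ∈ Set.Ico 0 2)] with r hr
      have h1 := (hJbound r hr).1
      have h2 : (0:ℝ) ≤ r ^ 2 / 2 := by positivity
      calc r ^ 2 / 2 * J r ≤ r ^ 2 / 2 * (M / 3) := by nlinarith
        _ = r ^ 2 * (M / 6) := by ring
    · have : Continuous fun r : ℝ => r ^ 2 * (M / 6) := (continuous_pow 2).mul continuous_const
      have h : Tendsto (fun r : ℝ => r ^ 2 * (M / 6)) (nhdsWithin 0 (Set.Ioi 0))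
          (nhds (0 ^ 2 * (M / 6))) :=
        (this.tendsto 0).mono_left nhdsWithin_le_nhds
      simpa using h
  constructor
  · have hlim : Tendsto (fun r => I + r ^ 2 / 2 * J r) (nhdsWithin 0 (Set.Ioi 0))
        (nhds (I + 0)) := tendsto_const_nhds.add hzero
    rw [add_zero] at hlim
    apply hlim.congr'
    filter_upwards [self_mem_nhdsWithin] with r hr
    exact (hkey r hr).symm
  · apply intervalIntegral_pos_of_pos_on (cont_f1.intervalIntegrable _ _) _ (by norm_num)
    intro x hx
    have : 0 < 1 - x ^ 2 := by nlinarith [hx.1, hx.2]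
    positivity
end
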